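/- Let (α, β) be an s-malleable deformation of M ⊆ Ã and set δ_t(x) = α_t(x) − E(α_t(x)). Then for all x, y ∈ M and all t ∈ ℝ: ‖δ_t(x)y − yδ_t(x)‖₂ ≤ 2‖x‖·‖α_t(y) − y‖₂ + ‖xy − yx‖₂. -/

import Mathlib

open scoped ComplexOrder
open Filter

/-- The 2-norm `‖x‖₂ = (τ(x*x))^{1/2}` associated to a tracial state `τ`. -/
noncomputable def traceNorm2 {A : Type*} [Ring A] [StarRing A] [Algebra ℂ A]
    (τ : A →ₗ[ℂ] ℂ) (x : A) : ℝ :=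
  Real.sqrt (τ (star x * x)).re

/-- Let `(α, β)` be an s-malleable deformation of `M ⊆ Ã` and set
`δ_t(x) = α_t(x) − E(α_t(x))`.  Then for all `x, y ∈ M` and all `t ∈ ℝ`:
`‖δ_t(x)y − yδ_t(x)‖₂ ≤ 2‖x‖·‖α_t(y) − y‖₂ + ‖xy − yx‖₂`. -/
theorem malleable_commutator_estimate
    {A : Type*} [NormedRing A] [StarRing A] [CStarRing A] [NormedAlgebra ℂ A]
    [StarModule ℂ A] [CompleteSpace A]
    -- τ is a faithful tracial state on Ã
    (τ : A →ₗ[ℂ] ℂ)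
    (hτ1 : τ 1 = 1)
    (hτpos : ∀ x : A, 0 ≤ τ (star x * x))
    (hτfaithful : ∀ x : A, τ (star x * x) = 0 → x = 0)
    (hτtrace : ∀ x y : A, τ (x * y) = τ (y * x))
    -- M is a unital C*-subalgebra of Ã
    (M : StarSubalgebra ℂ A) (hMclosed : IsClosed (M : Set A))
    -- E is a conditional expectation onto M
    (E : A →ₗ[ℂ] A)
    (hErange : ∀ x : A, E x ∈ M)
    (hEid : ∀ x ∈ M, E x = x)
    (hEbimod : ∀ a ∈ M, ∀ b ∈ M, ∀ x : A, E (a * x * b) = a * E x * b)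
    (hEstar : ∀ x : A, E (star x) = star (E x))
    (hEτ : ∀ x : A, τ (E x) = τ x)
    -- α : ℝ → Aut(Ã) is a trace-preserving one-parameter group of *-automorphisms
    (α : ℝ → A ≃⋆ₐ[ℂ] A)
    (hα_zero : ∀ x : A, α 0 x = x)
    (hα_add : ∀ s t : ℝ, ∀ x : A, α (s + t) x = α s (α t x))
    (hατ : ∀ t : ℝ, ∀ x : A, τ (α t x) = τ x)
    -- β is a trace-preserving *-automorphism making the deformation s-malleable
    (β : A ≃⋆ₐ[ℂ] A)
    (hβτ : ∀ x : A, τ (β x) = τ x)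
    (hβM : ∀ x ∈ M, β x = x)
    (hββ : ∀ x : A, β (β x) = x)
    (hβα : ∀ t : ℝ, ∀ x : A, β (α t x) = α (-t) (β x)) :
    ∀ x ∈ M, ∀ y ∈ M, ∀ t : ℝ,
      traceNorm2 τ ((α t x - E (α t x)) * y - y * (α t x - E (α t x))) ≤
        2 * ‖x‖ * traceNorm2 τ (α t y - y) + traceNorm2 τ (x * y - y * x) := by
  classical
  letI : CStarAlgebra A :=
    { toNormedRing := ‹_›, toStarRing := ‹_›, toCompleteSpace := ‹_›,
      toCStarRing := ‹_›, toNormedAlgebra := ‹_›, toStarModule := ‹_› }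
  letI : PartialOrder A := CStarAlgebra.spectralOrder A
  haveI : StarOrderedRing A := CStarAlgebra.spectralOrderedRing A
  set N : A → ℝ := traceNorm2 τ with hN
  -- basic positivity facts
  have hre : ∀ v : A, 0 ≤ (τ (star v * v)).re := fun v => (Complex.le_def.mp (hτpos v)).1
  have him : ∀ v : A, (τ (star v * v)).im = 0 := fun v => ((Complex.le_def.mp (hτpos v)).2).symm
  have hNnonneg : ∀ v : A, 0 ≤ N v := fun v => Real.sqrt_nonneg _
  have hNsq : ∀ v : A, (N v) ^ 2 = (τ (star v * v)).re := fun v => Real.sq_sqrt (hre v)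
  -- expansion of the quadratic form
  have expand : ∀ (s : ℂ) (a b : A),
      τ (star (s • a + b) * (s • a + b)) =
        (starRingEnd ℂ) s * s * τ (star a * a) + (starRingEnd ℂ) s * τ (star a * b)
          + s * τ (star b * a) + τ (star b * b) := by
    intro s a b
    have : star (s • a + b) * (s • a + b)
        = ((starRingEnd ℂ) s * s) • (star a * a) + (starRingEnd ℂ) s • (star a * b)
          + s • (star b * a) + star b * b := by
      simp only [star_add, star_smul, Complex.star_def, add_mul, mul_add, smul_mul_assoc,
        mul_smul_comm, smul_smul, smul_add]
      module
    rw [this]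
    simp only [map_add, map_smul, smul_eq_mul]
  -- hermitianity of τ
  have herm : ∀ v : A, τ (star v) = (starRingEnd ℂ) (τ v) := by
    intro v
    have h1 := him ((1 : ℂ) • v + 1)
    have h2 := him (Complex.I • v + 1)
    rw [expand 1 v 1] at h1
    rw [expand Complex.I v 1] at h2
    simp only [map_one, one_mul, mul_one, star_one, hτ1, Complex.add_im, Complex.one_im,
      Complex.mul_im, Complex.conj_I, Complex.I_re, Complex.I_im, Complex.neg_re,
      Complex.neg_im, Complex.one_re, him v] at h1 h2
    apply Complex.ext <;> simp only [Complex.conj_re, Complex.conj_im] <;> nlinarith [h1, h2]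
  -- monotonicity of τ w.r.t. the spectral order
  have τ_nonneg : ∀ p : A, 0 ≤ p → 0 ≤ τ p := by
    intro p hp
    rw [StarOrderedRing.nonneg_iff] at hp
    induction hp using AddSubmonoid.closure_induction with
    | mem q hq => obtain ⟨s, rfl⟩ := hq; exact hτpos s
    | zero => simp
    | add a b _ _ ha hb => rw [map_add]; exact add_nonneg ha hb
  have τ_mono : ∀ z w : A, z ≤ w → (τ z).re ≤ (τ w).re := by
    intro z w hzw
    have := τ_nonneg (w - z) (sub_nonneg.mpr hzw)
    have h := (Complex.le_def.mp this).1
    rw [map_sub] at h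
    simp only [Complex.zero_re, Complex.sub_re] at h
    linarith
  -- scalar form of conjugation by a bounded element
  have halg : ∀ (s : ℝ) (c : A), star c * algebraMap ℝ A s * c = (s : ℂ) • (star c * c) := by
    intro s c
    rw [IsScalarTower.algebraMap_apply ℝ ℂ A, Algebra.algebraMap_eq_smul_one]
    rw [mul_smul_comm, mul_one, smul_mul_assoc, Complex.coe_algebraMap]
  -- ‖u * c‖₂ ≤ ‖u‖ * ‖c‖₂
  have hmul_left : ∀ u c : A, N (u * c) ≤ ‖u‖ * N c := by
    intro u c
    have h1 : star (u * c) * (u * c) = star c * (star u * u) * c := by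
      simp [star_mul, mul_assoc]
    have h2 : star c * (star u * u) * c ≤ star c * algebraMap ℝ A (‖u‖ ^ 2) * c :=
      star_left_conjugate_le_conjugate CStarAlgebra.star_mul_le_algebraMap_norm_sq c
    have h3 : (τ (star (u * c) * (u * c))).re ≤ ‖u‖ ^ 2 * (τ (star c * c)).re := by
      have := τ_mono _ _ h2
      rw [h1]
      calc (τ (star c * (star u * u) * c)).re
          ≤ (τ (star c * algebraMap ℝ A (‖u‖ ^ 2) * c)).re := this
        _ = ‖u‖ ^ 2 * (τ (star c * c)).re := by
            rw [halg, map_smul, smul_eq_mul, Complex.re_ofReal_mul]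
    have : N (u * c) ≤ Real.sqrt (‖u‖ ^ 2 * (τ (star c * c)).re) := by
      exact Real.sqrt_le_sqrt h3
    calc N (u * c) ≤ Real.sqrt (‖u‖ ^ 2 * (τ (star c * c)).re) := this
      _ = ‖u‖ * N c := by
          rw [Real.sqrt_mul (sq_nonneg _), Real.sqrt_sq (norm_nonneg _)]
          rfl
  -- ‖c * u‖₂ ≤ ‖u‖ * ‖c‖₂
  have hmul_right : ∀ u c : A, N (c * u) ≤ ‖u‖ * N c := by
    intro u c
    have h1 : τ (star (c * u) * (c * u)) = τ (star (star c) * (u * star u) * star c) := by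
      rw [hτtrace (star (c * u)) (c * u)]
      congr 1
      simp [star_mul, mul_assoc, star_star]
    have h2 : star (star c) * (u * star u) * star c
        ≤ star (star c) * algebraMap ℝ A (‖u‖ ^ 2) * star c :=
      star_left_conjugate_le_conjugate CStarAlgebra.mul_star_le_algebraMap_norm_sq (star c)
    have h3 : (τ (star (c * u) * (c * u))).re ≤ ‖u‖ ^ 2 * (τ (star c * c)).re := by
      rw [h1]
      calc (τ (star (star c) * (u * star u) * star c)).re
          ≤ (τ (star (star c) * algebraMap ℝ A (‖u‖ ^ 2) * star c)).re := τ_mono _ _ h2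
        _ = ‖u‖ ^ 2 * (τ (star (star c) * star c)).re := by
            rw [halg, map_smul, smul_eq_mul, Complex.re_ofReal_mul]
        _ = ‖u‖ ^ 2 * (τ (star c * c)).re := by
            rw [star_star, hτtrace]
    calc N (c * u) ≤ Real.sqrt (‖u‖ ^ 2 * (τ (star c * c)).re) := Real.sqrt_le_sqrt h3
      _ = ‖u‖ * N c := by
          rw [Real.sqrt_mul (sq_nonneg _), Real.sqrt_sq (norm_nonneg _)]
          rfl
  have hreba : ∀ a b : A, (τ (star b * a)).re = (τ (star a * b)).re := by
    intro a b
    have : τ (star b * a) = (starRingEnd ℂ) (τ (star a * b)) := by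
      have h := herm (star b * a)
      rw [star_mul, star_star] at h
      have := congrArg (starRingEnd ℂ) h
      simpa using this.symm
    rw [this, Complex.conj_re]
  -- Cauchy–Schwarz for the real part
  have CS : ∀ a b : A, (τ (star a * b)).re ≤ N a * N b := by
    intro a b
    have key : ∀ t : ℝ, 0 ≤ (N a) ^ 2 * (t * t) + (2 * (τ (star a * b)).re) * t + (N b) ^ 2 := by
      intro t
      have h0 := hre ((t : ℂ) • a + b)
      rw [expand (t : ℂ) a b] at h0
      simp only [Complex.conj_ofReal, Complex.add_re, Complex.mul_re, Complex.ofReal_re,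
        Complex.ofReal_im, Complex.mul_im, him a] at h0
      rw [hreba a b] at h0
      rw [hNsq a, hNsq b]
      ring_nf at h0 ⊢
      linarith [h0]
    have hd := discrim_le_zero key
    rw [discrim] at hd
    have hsq : ((τ (star a * b)).re) ^ 2 ≤ (N a * N b) ^ 2 := by nlinarith
    calc (τ (star a * b)).re ≤ |(τ (star a * b)).re| := le_abs_self _
      _ = Real.sqrt (((τ (star a * b)).re) ^ 2) := (Real.sqrt_sq_eq_abs _).symm
      _ ≤ Real.sqrt ((N a * N b) ^ 2) := Real.sqrt_le_sqrt hsq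
      _ = N a * N b := Real.sqrt_sq (mul_nonneg (hNnonneg a) (hNnonneg b))
  -- triangle inequality
  have tri : ∀ a b : A, N (a + b) ≤ N a + N b := by
    intro a b
    have h0 := expand 1 a b
    simp only [one_smul, map_one, one_mul] at h0
    have h1 : (τ (star (a + b) * (a + b))).re
        = (N a) ^ 2 + 2 * (τ (star a * b)).re + (N b) ^ 2 := by
      rw [h0]
      simp only [Complex.add_re, hNsq]
      have := hreba a b
      linarith
    have h2 : (τ (star (a + b) * (a + b))).re ≤ (N a + N b) ^ 2 := by
      have := CS a b
      nlinarith
    calc N (a + b) = Real.sqrt ((τ (star (a + b) * (a + b))).re) := rfl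
      _ ≤ Real.sqrt ((N a + N b) ^ 2) := Real.sqrt_le_sqrt h2
      _ = N a + N b := Real.sqrt_sq (add_nonneg (hNnonneg a) (hNnonneg b))
  -- N (-v) = N v and invariance under α
  have hNneg : ∀ v : A, N (-v) = N v := by
    intro v
    simp [hN, traceNorm2]
  have hNα : ∀ (t : ℝ) (v : A), N (α t v) = N v := by
    intro t v
    simp only [hN, traceNorm2]
    rw [← map_star, ← map_mul, hατ]
  -- contraction property of 1 - E in ‖·‖₂
  have contr : ∀ z : A, N (z - E z) ≤ N z := by
    intro z
    have hEw : E (z - E z) = 0 := by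
      rw [map_sub, hEid _ (hErange z), sub_self]
    have c1 : τ (star (E z) * (z - E z)) = 0 := by
      have hm : star (E z) ∈ M := star_mem (hErange z)
      have hb := hEbimod _ hm 1 (one_mem M) (z - E z)
      rw [mul_one, mul_one, hEw, mul_zero] at hb
      rw [← hEτ (star (E z) * (z - E z)), hb, map_zero]
    have c2 : τ (star (z - E z) * E z) = 0 := by
      have hsw : E (star (z - E z)) = 0 := by rw [hEstar, hEw, star_zero]
      have hb := hEbimod 1 (one_mem M) _ (hErange z) (star (z - E z))
      rw [one_mul, one_mul, hsw, zero_mul] at hb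
      rw [← hEτ (star (z - E z) * E z), hb, map_zero]
    have hexp : τ (star z * z)
        = τ (star (z - E z) * (z - E z)) + τ (star (E z) * E z) := by
      have e : star z * z = star (z - E z) * (z - E z) + star (E z) * (z - E z)
          + star (z - E z) * E z + star (E z) * E z := by
        simp only [star_sub]
        noncomm_ring
      rw [e, map_add, map_add, map_add, c1, c2, add_zero, add_zero]
    have h1 : (τ (star (z - E z) * (z - E z))).re ≤ (τ (star z * z)).re := by
      have := hre (E z)
      rw [hexp]
      simp only [Complex.add_re]
      linarith
    exact Real.sqrt_le_sqrt h1
  -- main argument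
  intro x hx y hy t
  set u : A := α t x with hu
  have h1 : E (u * y) = E u * y := by
    have := hEbimod 1 (one_mem M) y hy u
    simpa using this
  have h2 : E (y * u) = y * E u := by
    have := hEbimod y hy 1 (one_mem M) u
    simpa using this
  have hkey : (u - E u) * y - y * (u - E u) = (u * y - y * u) - E (u * y - y * u) := by
    rw [map_sub, h1, h2]
    noncomm_ring
  have ha3 : α t (x * y - y * x) = u * α t y - α t y * u := by
    rw [map_sub, map_mul, map_mul, hu]
  have hz : u * y - y * u
      = u * (y - α t y) + -((y - α t y) * u) + α t (x * y - y * x) := by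
    rw [ha3]
    noncomm_ring
  have step1 : N (u * y - y * u)
      ≤ N (u * (y - α t y)) + N ((y - α t y) * u) + N (α t (x * y - y * x)) := by
    rw [hz]
    calc N (u * (y - α t y) + -((y - α t y) * u) + α t (x * y - y * x))
        ≤ N (u * (y - α t y) + -((y - α t y) * u)) + N (α t (x * y - y * x)) := tri _ _
      _ ≤ N (u * (y - α t y)) + N (-((y - α t y) * u)) + N (α t (x * y - y * x)) := by
          have := tri (u * (y - α t y)) (-((y - α t y) * u))
          linarith
      _ = N (u * (y - α t y)) + N ((y - α t y) * u) + N (α t (x * y - y * x)) := by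
          rw [hNneg]
  have hnu : ‖u‖ = ‖x‖ := StarAlgEquiv.norm_map (α t) x
  have hyn : N (y - α t y) = N (α t y - y) := by
    rw [← hNneg (α t y - y), neg_sub]
  have b1 : N (u * (y - α t y)) ≤ ‖x‖ * N (α t y - y) := by
    rw [← hnu, ← hyn]; exact hmul_left u _
  have b2 : N ((y - α t y) * u) ≤ ‖x‖ * N (α t y - y) := by
    rw [← hnu, ← hyn]; exact hmul_right u _
  have b3 : N (α t (x * y - y * x)) = N (x * y - y * x) := hNα t _
  have final : N ((u - E u) * y - y * (u - E u))
      ≤ 2 * ‖x‖ * N (α t y - y) + N (x * y - y * x) := by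
    rw [hkey]
    calc N ((u * y - y * u) - E (u * y - y * u)) ≤ N (u * y - y * u) := contr _
      _ ≤ N (u * (y - α t y)) + N ((y - α t y) * u) + N (α t (x * y - y * x)) := step1
      _ ≤ 2 * ‖x‖ * N (α t y - y) + N (x * y - y * x) := by
          rw [b3] at *
          linarith
  exact final
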